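/- Let A and B be finite sets with |A| = |B| = n ≥ 1 and let E ⊆ A × B be nonempty. Then there exist a natural number k with k ≤ 2n² · ln(n)/|E| + 1 and bijections σ₁, …, σ_k : A → A and ρ₁, …, ρ_k : B → B such that the union over i ∈ [k] of the sets {(σ_i(a), ρ_i(b)) : (a, b) ∈ E} equals A × B. -/

import Mathlib

open Finset

lemma key_count (n : ℕ) [NeZero n] (F : Finset (ZMod n × ZMod n))
    (U : Finset (ZMod n × ZMod n)) :
    ∃ g : ZMod n × ZMod n,
      F.card * U.card ≤ n ^ 2 * ((F.map (Equiv.addLeft g).toEmbedding) ∩ U).card := by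
  classical
  have hcardG : Fintype.card (ZMod n × ZMod n) = n ^ 2 := by
    simp [ZMod.card, sq]
  have hsum : ∑ g : ZMod n × ZMod n,
      ((F.map (Equiv.addLeft g).toEmbedding) ∩ U).card = F.card * U.card := by
    have h1 : ∀ g : ZMod n × ZMod n,
        ((F.map (Equiv.addLeft g).toEmbedding) ∩ U).card
          = ∑ u ∈ U, if u ∈ F.map (Equiv.addLeft g).toEmbedding then 1 else 0 := by
      intro g
      rw [Finset.inter_comm, ← Finset.filter_mem_eq_inter, Finset.card_filter]
    simp only [h1]
    rw [Finset.sum_comm]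
    have h2 : ∀ u : ZMod n × ZMod n,
        (∑ g : ZMod n × ZMod n, if u ∈ F.map (Equiv.addLeft g).toEmbedding then 1 else 0)
          = F.card := by
      intro u
      rw [← Finset.card_filter]
      have : (Finset.univ.filter (fun g : ZMod n × ZMod n =>
          u ∈ F.map (Equiv.addLeft g).toEmbedding)) = F.image (fun f => u - f) := by
        ext g
        simp only [Finset.mem_filter, Finset.mem_univ, true_and, Finset.mem_map_equiv,
          Finset.mem_image]
        constructor
        · intro h
          refine ⟨(Equiv.addLeft g).symm u, h, ?_⟩
          simp [sub_eq_iff_eq_add]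
        · rintro ⟨f, hf, rfl⟩
          simpa [sub_eq_iff_eq_add] using hf
      rw [this, Finset.card_image_of_injective _ (fun a b h => by
        simpa using sub_right_injective h)]
    rw [Finset.sum_congr rfl (fun u _ => h2 u), Finset.sum_const, Finset.card_eq_sum_ones U]
    ring_nf
  have hne : (Finset.univ : Finset (ZMod n × ZMod n)).Nonempty := Finset.univ_nonempty
  have hle : ∑ _g : ZMod n × ZMod n, F.card * U.card
      ≤ ∑ g : ZMod n × ZMod n, n ^ 2 * ((F.map (Equiv.addLeft g).toEmbedding) ∩ U).card := by
    have h3 : ∑ g : ZMod n × ZMod n, n ^ 2 * ((F.map (Equiv.addLeft g).toEmbedding) ∩ U).card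
        = n ^ 2 * (F.card * U.card) := by rw [← Finset.mul_sum, hsum]
    rw [h3, Finset.sum_const, smul_eq_mul, Finset.card_univ, hcardG]
  obtain ⟨g, -, hg⟩ := Finset.exists_le_of_sum_le hne hle
  exact ⟨g, hg⟩

lemma cover_zmod (n : ℕ) [NeZero n] (hn : 1 ≤ n) (F : Finset (ZMod n × ZMod n)) (hF : F.Nonempty) :
    ∃ (k : ℕ) (g : Fin k → ZMod n × ZMod n),
      (k : ℝ) ≤ 2 * (n : ℝ) ^ 2 * Real.log n / (F.card : ℝ) + 1 ∧
      (Finset.univ : Finset (Fin k)).biUnion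
        (fun i => F.map (Equiv.addLeft (g i)).toEmbedding) = Finset.univ := by
  classical
  have hcardG : Fintype.card (ZMod n × ZMod n) = n ^ 2 := by simp [ZMod.card, sq]
  have hm : 0 < F.card := hF.card_pos
  have hmn : F.card ≤ n ^ 2 := hcardG ▸ F.card_le_univ
  set T : (ZMod n × ZMod n) → Finset (ZMod n × ZMod n) :=
    fun g => F.map (Equiv.addLeft g).toEmbedding with hT
  let U : ℕ → Finset (ZMod n × ZMod n) := fun j =>
    Nat.rec Finset.univ (fun _ Uj => Uj \ T (Classical.choose (key_count n F Uj))) j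
  let g : ℕ → ZMod n × ZMod n := fun j => Classical.choose (key_count n F (U j))
  have hUsucc : ∀ j, U (j + 1) = U j \ T (g j) := fun j => rfl
  have hg : ∀ j, F.card * (U j).card ≤ n ^ 2 * ((T (g j)) ∩ U j).card :=
    fun j => Classical.choose_spec (key_count n F (U j))
  have hn0 : (0 : ℝ) < (n : ℝ) := by exact_mod_cast (by omega : 0 < n)
  set m : ℝ := (F.card : ℝ) with hmdef
  have hm0 : (0 : ℝ) < m := by rw [hmdef]; exact_mod_cast hm
  set p : ℝ := m / (n : ℝ) ^ 2 with hpdef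
  have hp0 : 0 < p := div_pos hm0 (by positivity)
  have hp1 : p ≤ 1 := by
    rw [hpdef, hmdef, div_le_one (by positivity)]
    have h : ((F.card : ℕ) : ℝ) ≤ ((n ^ 2 : ℕ) : ℝ) := by exact_mod_cast hmn
    push_cast at h
    linarith
  have hUb : ∀ j, ((U j).card : ℝ) ≤ (n : ℝ) ^ 2 * (1 - p) ^ j := by
    intro j
    induction j with
    | zero =>
      have : (U 0).card = n ^ 2 := by
        rw [show U 0 = Finset.univ from rfl, Finset.card_univ, hcardG]
      rw [this]; push_cast; simp
    | succ j ih =>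
      have hcard : (U (j + 1)).card + (U j ∩ T (g j)).card = (U j).card := by
        rw [hUsucc]; exact Finset.card_sdiff_add_card_inter _ _
      have hR : m * ((U j).card : ℝ) ≤ (n : ℝ) ^ 2 * ((U j ∩ T (g j)).card : ℝ) := by
        have h := hg j
        rw [Finset.inter_comm] at h
        rw [hmdef]
        exact_mod_cast h
      have h1 : p * ((U j).card : ℝ) ≤ ((U j ∩ T (g j)).card : ℝ) := by
        rw [hpdef, div_mul_eq_mul_div, div_le_iff₀ (by positivity)]
        nlinarith [hR]
      have h2 : ((U (j + 1)).card : ℝ) = ((U j).card : ℝ) - ((U j ∩ T (g j)).card : ℝ) := by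
        have := hcard
        push_cast [← this]
        ring
      have hcnn : (0 : ℝ) ≤ ((U j).card : ℝ) := by positivity
      calc ((U (j + 1)).card : ℝ) = ((U j).card : ℝ) - ((U j ∩ T (g j)).card : ℝ) := h2
        _ ≤ ((U j).card : ℝ) * (1 - p) := by nlinarith
        _ ≤ ((n : ℝ) ^ 2 * (1 - p) ^ j) * (1 - p) :=
            mul_le_mul_of_nonneg_right ih (by linarith)
        _ = (n : ℝ) ^ 2 * (1 - p) ^ (j + 1) := by ring
  have hlog : 0 ≤ Real.log n := Real.log_nonneg (by exact_mod_cast hn)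
  set x : ℝ := 2 * (n : ℝ) ^ 2 * Real.log n / m with hxdef
  have hx0 : 0 ≤ x := by positivity
  set K : ℕ := ⌊x⌋₊ + 1 with hKdef
  have hKle : (K : ℝ) ≤ x + 1 := by
    rw [hKdef]; push_cast
    linarith [Nat.floor_le hx0]
  have hKgt : x < (K : ℝ) := by
    rw [hKdef]; push_cast
    exact Nat.lt_floor_add_one x
  have hUK : U K = ∅ := by
    have h1 : ((U K).card : ℝ) ≤ (n : ℝ) ^ 2 * (1 - p) ^ K := hUb K
    have h2 : (1 - p) ^ K ≤ Real.exp (-p) ^ K :=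
      pow_le_pow_left₀ (by linarith) (by linarith [Real.add_one_le_exp (-p)]) K
    have h3 : Real.exp (-p) ^ K = Real.exp (-(p * K)) := by
      rw [← Real.exp_nat_mul]; ring_nf
    have hpk : 2 * Real.log n < p * K := by
      have hpx : p * x = 2 * Real.log n := by
        rw [hpdef, hxdef]; field_simp
      calc 2 * Real.log n = p * x := hpx.symm
        _ < p * K := by exact mul_lt_mul_of_pos_left hKgt hp0
    have hexp : (n : ℝ) ^ 2 < Real.exp (p * K) := by
      calc (n : ℝ) ^ 2 = Real.exp (Real.log ((n : ℝ) ^ 2)) :=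
            (Real.exp_log (by positivity)).symm
        _ = Real.exp (2 * Real.log n) := by rw [Real.log_pow]; norm_num
        _ < Real.exp (p * K) := Real.exp_lt_exp.mpr hpk
    have h4 : (n : ℝ) ^ 2 * Real.exp (-(p * K)) < 1 := by
      rw [Real.exp_neg, ← div_eq_mul_inv]
      exact (div_lt_one (Real.exp_pos _)).mpr hexp
    have h5 : ((U K).card : ℝ) < 1 := by
      calc ((U K).card : ℝ) ≤ (n : ℝ) ^ 2 * (1 - p) ^ K := h1
        _ ≤ (n : ℝ) ^ 2 * Real.exp (-p) ^ K := mul_le_mul_of_nonneg_left h2 (by positivity)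
        _ = (n : ℝ) ^ 2 * Real.exp (-(p * K)) := by rw [h3]
        _ < 1 := h4
    have : (U K).card = 0 := by exact_mod_cast Nat.lt_one_iff.mp (by exact_mod_cast h5)
    exact Finset.card_eq_zero.mp this
  have hcover : ∀ y : ZMod n × ZMod n, ∃ j, j < K ∧ y ∈ T (g j) := by
    intro y
    by_contra hcon
    push_neg at hcon
    have hmem : ∀ j, j ≤ K → y ∈ U j := by
      intro j
      induction j with
      | zero => intro _; exact Finset.mem_univ y
      | succ j ih =>
        intro hj
        rw [hUsucc]
        exact Finset.mem_sdiff.mpr ⟨ih (by omega), hcon j (by omega)⟩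
    have := hmem K le_rfl
    rw [hUK] at this
    exact absurd this (Finset.notMem_empty y)
  refine ⟨K, fun i => g i, ?_, ?_⟩
  · exact hKle
  · ext y
    simp only [Finset.mem_biUnion, Finset.mem_univ, true_and, iff_true]
    obtain ⟨j, hj, hy⟩ := hcover y
    exact ⟨⟨j, hj⟩, hy⟩

/-- covering the complete bipartite graph by at most
`2n² ln(n)/|E| + 1` side-preserving permuted copies of a nonempty edge set `E`. -/
theorem stmt_13 {A B : Type*} [Fintype A] [Fintype B] [DecidableEq A] [DecidableEq B]
    (n : ℕ) (hn : 1 ≤ n) (hA : Fintype.card A = n) (hB : Fintype.card B = n)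
    (E : Finset (A × B)) (hE : E.Nonempty) :
    ∃ (k : ℕ) (σ : Fin k → (A ≃ A)) (ρ : Fin k → (B ≃ B)),
      (k : ℝ) ≤ 2 * (n : ℝ) ^ 2 * Real.log n / (E.card : ℝ) + 1 ∧
      (Finset.univ : Finset (Fin k)).biUnion
          (fun i => E.image (fun p => ((σ i) p.1, (ρ i) p.2)))
        = (Finset.univ : Finset (A × B)) := by
  classical
  haveI : NeZero n := ⟨by omega⟩
  let eA : A ≃ ZMod n := Fintype.equivOfCardEq (by rw [hA, ZMod.card])
  let eB : B ≃ ZMod n := Fintype.equivOfCardEq (by rw [hB, ZMod.card])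
  let F : Finset (ZMod n × ZMod n) := E.image (fun p => (eA p.1, eB p.2))
  have hFcard : F.card = E.card := Finset.card_image_of_injective _ (by
    intro p q h
    simp only [Prod.mk.injEq] at h
    exact Prod.ext (eA.injective h.1) (eB.injective h.2))
  have hFne : F.Nonempty := hE.image _
  obtain ⟨k, g, hk, hcov⟩ := cover_zmod n hn F hFne
  refine ⟨k, fun i => eA.trans ((Equiv.addLeft (g i).1).trans eA.symm),
    fun i => eB.trans ((Equiv.addLeft (g i).2).trans eB.symm), by rwa [hFcard] at hk, ?_⟩
  ext ⟨a, b⟩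
  simp only [Finset.mem_univ, iff_true, Finset.mem_biUnion, Finset.mem_image, true_and]
  have hmem : (eA a, eB b) ∈ (Finset.univ : Finset (Fin k)).biUnion
      (fun i => F.map (Equiv.addLeft (g i)).toEmbedding) := by
    rw [hcov]; exact Finset.mem_univ _
  obtain ⟨i, -, hmem'⟩ := Finset.mem_biUnion.mp hmem
  rw [Finset.mem_map_equiv] at hmem'
  obtain ⟨p, hpE, hpeq⟩ := Finset.mem_image.mp hmem'
  have h2 := congrArg (Equiv.addLeft (g i)) hpeq
  simp only [Equiv.apply_symm_apply, Equiv.coe_addLeft] at h2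
  have h21 : (g i).1 + eA p.1 = eA a := congrArg Prod.fst h2
  have h22 : (g i).2 + eB p.2 = eB b := congrArg Prod.snd h2
  refine ⟨i, p, hpE, ?_⟩
  simp only [Equiv.trans_apply, Equiv.coe_addLeft]
  rw [h21, h22, Equiv.symm_apply_apply, Equiv.symm_apply_apply]
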